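/- Let a > −1, b > −1, c > max{0, a−b} be real numbers, d ∈ {0, 1} and n a nonnegative integer. Then the polynomial P_n^{(d)}(x) = P_n^{(d)}(x; a, b, c) satisfies, for all real x, the third-order differential equation x² P_n^{(d)}'''(x) − x (x − (a+b+3)) P_n^{(d)}''(x) + ( (⌊(n+1−d)/2⌋ − (c+b+2)) x + (a+1)(b+1) ) P_n^{(d)}'(x) + n (c+b+1+⌊(n+d)/2⌋) P_n^{(d)}(x) = 0. -/

import Mathlib

/-- Pochhammer symbol `(z)_k = z (z+1) ⋯ (z+k-1)`. -/
noncomputable def poch (z : ℝ) (k : ℕ) : ℝ := ∏ i ∈ Finset.range k, (z + i)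

/-- The monic type II multiple orthogonal polynomial on the step line:
`P_n^{(d)}(x; a, b, c) = Σ_{j=0}^n (−1)^{n−j} C(n,j)
  ((a+1+j)_{n−j}(b+1+j)_{n−j}/(c+b+1+⌊(n+d)/2⌋+j)_{n−j}) x^j`. -/
noncomputable def Ptype2 (d : ℕ) (a b c : ℝ) (n : ℕ) (x : ℝ) : ℝ :=
  ∑ j ∈ Finset.range (n + 1),
    (-1 : ℝ) ^ (n - j) * (n.choose j : ℝ) *
      (poch (a + 1 + j) (n - j) * poch (b + 1 + j) (n - j) /
        poch (c + b + 1 + (((n + d) / 2 : ℕ) : ℝ) + j) (n - j)) * x ^ j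

lemma poch_succ (z : ℝ) (k : ℕ) : poch z (k+1) = z * poch (z+1) k := by
  unfold poch
  rw [Finset.prod_range_succ']
  simp only [Nat.cast_zero, add_zero]
  rw [mul_comm]
  congr 1
  exact Finset.prod_congr rfl fun i _ => by push_cast; ring

lemma poch_pos {z : ℝ} (hz : 0 < z) (k : ℕ) : 0 < poch z k :=
  Finset.prod_pos fun i _ => by positivity

set_option maxHeartbeats 1000000 in
lemma key_rec (a b c : ℝ) (hb : b > -1) (hc0 : 0 < c) (k n j : ℕ)
    (hj : j < n) :
    ((j:ℝ)+1)*((a+1+j)*(b+1+j)) *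
      ((-1 : ℝ) ^ (n - (j+1)) * (n.choose (j+1) : ℝ) *
      (poch (a + 1 + (j+1:ℕ)) (n - (j+1)) * poch (b + 1 + (j+1:ℕ)) (n - (j+1)) /
        poch (c + b + 1 + (k : ℝ) + (j+1:ℕ)) (n - (j+1))))
    + (((n:ℝ)-j)*((c+b+1+(k:ℝ))+j)) *
      ((-1 : ℝ) ^ (n - j) * (n.choose j : ℝ) *
      (poch (a + 1 + j) (n - j) * poch (b + 1 + j) (n - j) /
        poch (c + b + 1 + (k : ℝ) + j) (n - j))) = 0 := by
  obtain ⟨m, hm⟩ : ∃ m, n - (j+1) = m := ⟨_, rfl⟩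
  have hnj : n - j = m + 1 := by omega
  have hnm : (n:ℝ) = (j:ℝ) + 1 + m := by
    have : n = j + 1 + m := by omega
    exact_mod_cast congrArg (Nat.cast : ℕ → ℝ) this
  have hch : ((n.choose (j+1) : ℝ)) * ((j:ℝ)+1) = (n.choose j : ℝ) * ((m:ℝ)+1) := by
    have := Nat.choose_succ_right_eq n j
    rw [hnj] at this
    exact_mod_cast congrArg (Nat.cast : ℕ → ℝ) this
  have hsgn : (-1 : ℝ) ^ (n - j) = -(-1:ℝ)^m := by
    rw [hnj, pow_succ]; ring
  have e1 : poch (a + 1 + j) (n - j) = (a+1+(j:ℝ)) * poch (a + 1 + ((j+1:ℕ):ℝ)) m := by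
    rw [hnj, poch_succ]; push_cast; ring_nf
  have e2 : poch (b + 1 + j) (n - j) = (b+1+(j:ℝ)) * poch (b + 1 + ((j+1:ℕ):ℝ)) m := by
    rw [hnj, poch_succ]; push_cast; ring_nf
  have e3 : poch (c + b + 1 + (k:ℝ) + j) (n - j)
      = (c+b+1+(k:ℝ)+(j:ℝ)) * poch (c + b + 1 + (k:ℝ) + ((j+1:ℕ):ℝ)) m := by
    rw [hnj, poch_succ]; push_cast; ring_nf
  rw [hm, hsgn, e1, e2, e3, hnm]
  have hS : (0:ℝ) < c + b + 1 + (k:ℝ) + (j:ℝ) := by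
    nlinarith [Nat.cast_nonneg (α := ℝ) k, Nat.cast_nonneg (α := ℝ) j]
  have hPS : (0:ℝ) < poch (c + b + 1 + (k:ℝ) + ((j+1:ℕ):ℝ)) m := by
    apply poch_pos
    push_cast
    nlinarith [Nat.cast_nonneg (α := ℝ) k, Nat.cast_nonneg (α := ℝ) j]
  set X1 := poch (a + 1 + ((j+1:ℕ):ℝ)) m
  set X2 := poch (b + 1 + ((j+1:ℕ):ℝ)) m
  set X3 := poch (c + b + 1 + (k:ℝ) + ((j+1:ℕ):ℝ)) m
  have hX3 : X3 ≠ 0 := ne_of_gt hPS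
  have hS' : c + b + 1 + (k:ℝ) + (j:ℝ) ≠ 0 := ne_of_gt hS
  field_simp
  linear_combination ((-1:ℝ)^m*(a+1+(j:ℝ))*(b+1+(j:ℝ))*X1*X2) * hch

open Polynomial in
set_option maxHeartbeats 2000000 in
theorem third_order_ODE (a b c : ℝ) (ha : a > -1) (hb : b > -1)
    (hc : c > max 0 (a - b)) (d : ℕ) (hd : d ≤ 1) (n : ℕ) (x : ℝ) :
    x ^ 2 * deriv^[3] (Ptype2 d a b c n) x
      - x * (x - (a + b + 3)) * deriv^[2] (Ptype2 d a b c n) x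
      + (((((n + 1 - d) / 2 : ℕ) : ℝ) - (c + b + 2)) * x + (a + 1) * (b + 1)) *
          deriv (Ptype2 d a b c n) x
      + n * (c + b + 1 + (((n + d) / 2 : ℕ) : ℝ)) * Ptype2 d a b c n x = 0 := by
  have hc0 : (0:ℝ) < c := lt_of_le_of_lt (le_max_left _ _) hc
  set k : ℕ := (n + d) / 2 with hkdef
  set cf : ℕ → ℝ := fun j => (-1 : ℝ) ^ (n - j) * (n.choose j : ℝ) *
      (poch (a + 1 + j) (n - j) * poch (b + 1 + j) (n - j) /
        poch (c + b + 1 + (k : ℝ) + j) (n - j)) with hcf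
  set Q : Polynomial ℝ := ∑ j ∈ Finset.range (n+1), Polynomial.C (cf j) * Polynomial.X ^ j with hQdef
  have hcoeff : ∀ m : ℕ, Q.coeff m = if m ≤ n then cf m else 0 := by
    intro m
    rw [hQdef, Polynomial.finset_sum_coeff]
    simp only [Polynomial.coeff_C_mul, Polynomial.coeff_X_pow]
    rw [Finset.sum_congr rfl (fun j _ => by rw [mul_ite, mul_one, mul_zero]),
      Finset.sum_ite_eq (Finset.range (n+1)) m cf]
    simp [Nat.lt_succ_iff]
  have hP : Ptype2 d a b c n = fun y => Q.eval y := by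
    funext y
    rw [Ptype2, hQdef, Polynomial.eval_finset_sum]
    exact Finset.sum_congr rfl fun j _ => by simp [hcf, hkdef]
  have h1 : deriv (Ptype2 d a b c n) = fun y => (derivative Q).eval y := by
    rw [hP]; funext y; exact Polynomial.deriv Q
  have h2 : deriv^[2] (Ptype2 d a b c n) = fun y => (derivative (derivative Q)).eval y := by
    have e : deriv^[2] (Ptype2 d a b c n) = deriv (deriv (Ptype2 d a b c n)) := rfl
    rw [e, h1]; funext y; exact Polynomial.deriv _
  have h3 : deriv^[3] (Ptype2 d a b c n) = fun y => (derivative (derivative (derivative Q))).eval y := by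
    have e : deriv^[3] (Ptype2 d a b c n) = deriv (deriv^[2] (Ptype2 d a b c n)) := rfl
    rw [e, h2]; funext y; exact Polynomial.deriv _
  -- key coefficient recurrence
  have key : ∀ j : ℕ, ((j:ℝ)+1)*((a+1+(j:ℝ))*(b+1+(j:ℝ))) * Q.coeff (j+1)
      + (((n:ℝ)-(j:ℝ))*((c+b+1+(k:ℝ))+(j:ℝ))) * Q.coeff j = 0 := by
    intro j
    rcases lt_trichotomy j n with hj | rfl | hj
    · rw [hcoeff, hcoeff, if_pos (by omega : j + 1 ≤ n), if_pos (le_of_lt hj)]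
      simp only [hcf]
      exact key_rec a b c hb hc0 k n j hj
    · rw [hcoeff, hcoeff, if_neg (by omega), if_pos le_rfl]
      ring
    · rw [hcoeff, hcoeff, if_neg (by omega), if_neg (by omega)]
      ring
  have hkR : (((n + 1 - d) / 2 : ℕ) : ℝ) = (n:ℝ) - (k:ℝ) := by
    have h : (n + 1 - d) / 2 + k = n := by omega
    have := congrArg (Nat.cast : ℕ → ℝ) h
    push_cast at this
    linarith
  set B' : ℝ := (((n + 1 - d) / 2 : ℕ) : ℝ) - (c + b + 2) with hB'
  set R : Polynomial ℝ :=
    derivative (derivative (derivative Q)) * X^2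
    - derivative (derivative Q) * X^2
    + C (a+b+3) * (derivative (derivative Q) * X^1)
    + C B' * (derivative Q * X^1)
    + C ((a+1)*(b+1)) * derivative Q
    + C ((n:ℝ) * (c + b + 1 + (k:ℝ))) * Q with hRdef
  have hR : R = 0 := by
    apply Polynomial.ext
    intro m
    simp only [hRdef, coeff_add, coeff_sub, coeff_C_mul, Polynomial.coeff_mul_X_pow',
      Polynomial.coeff_derivative, coeff_zero]
    obtain _ | _ | t := m
    · simp only [Nat.zero_le, le_refl, Nat.not_succ_le_zero, if_false, Nat.cast_zero]
      norm_num
      linear_combination key 0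
    · norm_num
      rw [hB', hkR]
      linear_combination key 1
    · have h2le : 2 ≤ t + 1 + 1 := by omega
      have h1le : 1 ≤ t + 1 + 1 := by omega
      rw [if_pos h2le, if_pos h2le, if_pos h1le, if_pos h1le]
      have e2 : t + 1 + 1 - 2 = t := by omega
      have e1 : t + 1 + 1 - 1 = t + 1 := by omega
      rw [e2, e1]
      rw [hB', hkR]
      have hk2 := key (t + 2)
      push_cast at hk2 ⊢
      linear_combination hk2
  have hev := congrArg (Polynomial.eval x) hR
  rw [h3, h2, h1, hP]
  simp only [hRdef, eval_add, eval_sub, eval_mul, eval_pow, eval_C, eval_X, eval_zero] at hev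
  linear_combination hev
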